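/- Let c ∈ ℂ, r > 0, and let f : ℂ → ℂ be complex-differentiable on an open set containing the closed disk {z : |z - c| ≤ r}. Let x_0, …, x_n be distinct points in the open disk {z : |z - c| < r}, and let z_1, …, z_m ∈ ℂ with z_j ∉ {x_0, …, x_n} for all j. Set l(s) = ∏_{i=0}^n (s - x_i), q(s) = ∏_{j=1}^m (s - z_j), and define the rational interpolant with poles z_1, …, z_m by r(x) = ∑_{i=0}^n f(x_i)·(q(x_i)/q(x))·∏_{j≠i} (x - x_j)/(x_i - x_j). Then for every x in the open disk {z : |z - c| < r} with q(x) ≠ 0, f(x) - r(x) = (1/(2πi)) ∮_{|t-c|=r} (l(x)·q(t))/(l(t)·q(x))·(f(t)/(t - x)) dt. -/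

import Mathlib

open Finset Metric Real Complex

lemma circleIntegral_finset_sum {ι : Type*} (s : Finset ι) (g : ι → ℂ → ℂ) {c : ℂ} {R : ℝ}
    (h : ∀ i ∈ s, CircleIntegrable (g i) c R) :
    (∮ z in C(c, R), ∑ i ∈ s, g i z) = ∑ i ∈ s, ∮ z in C(c, R), g i z := by
  simp only [circleIntegral, smul_sum]
  exact intervalIntegral.integral_finset_sum (fun i hi => (h i hi).out)

lemma circleIntegral_add' {f g : ℂ → ℂ} {c : ℂ} {R : ℝ}
    (hf : CircleIntegrable f c R) (hg : CircleIntegrable g c R) :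
    (∮ z in C(c, R), (f z + g z)) = (∮ z in C(c, R), f z) + ∮ z in C(c, R), g z := by
  simp only [circleIntegral, smul_add]
  exact intervalIntegral.integral_add hf.out hg.out

lemma lagrange_sum_one {k : ℕ} (x : Fin (k + 1) → ℂ) (hx : Function.Injective x) (t : ℂ) :
    ∑ i, ∏ j ∈ univ.erase i, ((x i - x j)⁻¹ * (t - x j)) = 1 := by
  have h := Lagrange.sum_basis (s := (univ : Finset (Fin (k + 1)))) (v := x) hx.injOn
    univ_nonempty
  have h2 := congrArg (Polynomial.eval t) h
  simpa [Lagrange.basis, Lagrange.basisDivisor, Polynomial.eval_finset_sum,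
    Polynomial.eval_prod] using h2

lemma partial_fractions {k : ℕ} (x : Fin (k + 1) → ℂ) (hx : Function.Injective x) (t : ℂ)
    (ht : ∀ i, t ≠ x i) :
    (∏ i, (t - x i))⁻¹ =
      ∑ i, (∏ j ∈ univ.erase i, (x i - x j))⁻¹ * (t - x i)⁻¹ := by
  have h1 := lagrange_sum_one x hx t
  have hne : ∀ i, t - x i ≠ 0 := fun i => sub_ne_zero.mpr (ht i)
  calc (∏ i, (t - x i))⁻¹
      = (∑ i, ∏ j ∈ univ.erase i, ((x i - x j)⁻¹ * (t - x j))) * (∏ i, (t - x i))⁻¹ := by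
        rw [h1, one_mul]
    _ = ∑ i, (∏ j ∈ univ.erase i, ((x i - x j)⁻¹ * (t - x j))) * (∏ i, (t - x i))⁻¹ := by
        rw [sum_mul]
    _ = ∑ i, (∏ j ∈ univ.erase i, (x i - x j))⁻¹ * (t - x i)⁻¹ := by
        refine sum_congr rfl fun i _ => ?_
        rw [prod_mul_distrib, ← Finset.mul_prod_erase univ (fun j => t - x j) (mem_univ i),
          ← prod_inv_distrib]
        have h2 : ∏ j ∈ univ.erase i, (t - x j) ≠ 0 :=
          prod_ne_zero_iff.mpr fun j _ => hne j
        have hW : ∏ j ∈ univ.erase i, (x i - x j) ≠ 0 :=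
          prod_ne_zero_iff.mpr fun j hj =>
            sub_ne_zero.mpr fun hc => (mem_erase.mp hj).1 (hx hc.symm)
        field_simp

lemma partial_fractions₂ {k : ℕ} (x : Fin (k + 1) → ℂ) (hx : Function.Injective x) (X t : ℂ)
    (hX : ∀ i, X ≠ x i) (ht : ∀ i, t ≠ x i) (htX : t ≠ X) :
    ((t - X) * ∏ i, (t - x i))⁻¹ =
      (∏ i, (X - x i))⁻¹ * (t - X)⁻¹ +
      ∑ i, (∏ j ∈ univ.erase i, (x i - x j))⁻¹ * (x i - X)⁻¹ * (t - x i)⁻¹ := by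
  have h1 := partial_fractions x hx t ht
  have h2 := partial_fractions x hx X hX
  have htX' : t - X ≠ 0 := sub_ne_zero.mpr htX
  calc ((t - X) * ∏ i, (t - x i))⁻¹
      = (t - X)⁻¹ * ∑ i, (∏ j ∈ univ.erase i, (x i - x j))⁻¹ * (t - x i)⁻¹ := by
        rw [mul_inv, h1]
    _ = ∑ i, (t - X)⁻¹ * ((∏ j ∈ univ.erase i, (x i - x j))⁻¹ * (t - x i)⁻¹) := by
        rw [Finset.mul_sum]
    _ = ∑ i, ((∏ j ∈ univ.erase i, (x i - x j))⁻¹ * (x i - X)⁻¹ * (t - x i)⁻¹ +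
          (∏ j ∈ univ.erase i, (x i - x j))⁻¹ * (X - x i)⁻¹ * (t - X)⁻¹) := by
        refine sum_congr rfl fun i _ => ?_
        have h3 : t - x i ≠ 0 := sub_ne_zero.mpr (ht i)
        have h4 : x i - X ≠ 0 := sub_ne_zero.mpr fun hc => hX i hc.symm
        have h5 : X - x i ≠ 0 := sub_ne_zero.mpr (hX i)
        have hW : ∏ j ∈ univ.erase i, (x i - x j) ≠ 0 :=
          prod_ne_zero_iff.mpr fun j hj =>
            sub_ne_zero.mpr fun hc => (mem_erase.mp hj).1 (hx hc.symm)
        field_simp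
        ring
    _ = (∏ i, (X - x i))⁻¹ * (t - X)⁻¹ +
        ∑ i, (∏ j ∈ univ.erase i, (x i - x j))⁻¹ * (x i - X)⁻¹ * (t - x i)⁻¹ := by
        rw [sum_add_distrib, add_comm]
        congr 1
        rw [← sum_mul, h2]

lemma cauchy_one_pole (c : ℂ) (r : ℝ) (hr : 0 < r) (U : Set ℂ)
    (hUsub : Metric.closedBall c r ⊆ U) (F : ℂ → ℂ) (hF : DifferentiableOn ℂ F U)
    (w : ℂ) (hw : w ∈ Metric.ball c r) :
    (∮ t in C(c, r), (t - w)⁻¹ * F t) = 2 * Real.pi * Complex.I * F w := by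
  have := (hF.mono hUsub).circleIntegral_sub_inv_smul hw
  simpa [smul_eq_mul] using this

lemma circleIntegrable_one_pole (c : ℂ) (r : ℝ) (hr : 0 < r) (U : Set ℂ)
    (hUsub : Metric.closedBall c r ⊆ U) (F : ℂ → ℂ) (hF : DifferentiableOn ℂ F U)
    (w : ℂ) (hw : w ∈ Metric.ball c r) :
    CircleIntegrable (fun t => (t - w)⁻¹ * F t) c r := by
  apply ContinuousOn.circleIntegrable hr.le
  have hsub : Metric.sphere c r ⊆ U := fun t ht =>
    hUsub (Metric.sphere_subset_closedBall ht)
  refine ContinuousOn.mul ?_ ((hF.continuousOn).mono hsub)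
  refine ContinuousOn.inv₀ (by fun_prop) fun t ht => sub_ne_zero.mpr fun hc => ?_
  rw [Metric.mem_sphere] at ht
  have h2 : dist w c < r := Metric.mem_ball.mp hw
  rw [← hc] at h2
  exact absurd ht (ne_of_lt h2)

lemma circleIntegrable_const_mul {g : ℂ → ℂ} {c : ℂ} {R : ℝ} (hg : CircleIntegrable g c R)
    (a : ℂ) : CircleIntegrable (fun z => a * g z) c R :=
  IntervalIntegrable.const_mul hg a

lemma circleIntegrable_sum {ι : Type*} (s : Finset ι) (g : ι → ℂ → ℂ) {c : ℂ} {R : ℝ}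
    (h : ∀ i ∈ s, CircleIntegrable (g i) c R) :
    CircleIntegrable (fun z => ∑ i ∈ s, g i z) c R := by
  have h2 := IntervalIntegrable.sum s (f := fun i θ => g i (circleMap c R θ))
    (fun i hi => h i hi)
  have h3 : (∑ i ∈ s, fun θ => g i (circleMap c R θ)) =
      fun θ => ∑ i ∈ s, g i (circleMap c R θ) := by
    funext θ; simp
  rw [h3] at h2
  exact h2

/-- Walsh's Hermite integral formula for rational interpolation with prescribed poles,
with the contour taken to be the circle of center `c` and radius `r`. -/
theorem hermite_integral_formula_rational (c : ℂ) (r : ℝ) (hr : 0 < r) (f : ℂ → ℂ)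
    (U : Set ℂ) (hUopen : IsOpen U) (hUsub : Metric.closedBall c r ⊆ U)
    (hf : DifferentiableOn ℂ f U)
    (n : ℕ) (x : Fin (n + 1) → ℂ) (hx : Function.Injective x)
    (hxball : ∀ i, x i ∈ Metric.ball c r)
    (m : ℕ) (z : Fin m → ℂ) (hz : ∀ j i, z j ≠ x i)
    (l q R : ℂ → ℂ)
    (hl : ∀ s, l s = ∏ i, (s - x i))
    (hq : ∀ s, q s = ∏ j, (s - z j))
    (hR : ∀ X, R X = ∑ i, f (x i) * (q (x i) / q X) *
      ∏ j ∈ univ.erase i, (X - x j) / (x i - x j))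
    (X : ℂ) (hX : X ∈ Metric.ball c r) (hqX : q X ≠ 0) :
    f X - R X = (1 / (2 * (Real.pi : ℂ) * Complex.I)) *
      ∮ t in C(c, r), (l X * q t) / (l t * q X) * (f t / (t - X)) := by
  have h2pi : (2 * (Real.pi : ℂ) * Complex.I) ≠ 0 := by
    simp [Real.pi_ne_zero, Complex.I_ne_zero]
  by_cases hXx : ∃ i, X = x i
  · -- degenerate case: X is one of the nodes
    obtain ⟨i0, hi0⟩ := hXx
    have hlX : l X = 0 := by
      rw [hl]
      exact prod_eq_zero (mem_univ i0) (by rw [hi0, sub_self])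
    have hRX : R X = f X := by
      rw [hR]
      rw [Finset.sum_eq_single i0]
      · have hprod : ∏ j ∈ univ.erase i0, (X - x j) / (x i0 - x j) = 1 := by
          apply prod_eq_one
          intro j hj
          rw [hi0]
          exact div_self (sub_ne_zero.mpr fun hc => (mem_erase.mp hj).1 (hx hc).symm)
        rw [hprod, ← hi0, div_self hqX, mul_one, mul_one]
      · intro i _ hne
        apply mul_eq_zero_of_right
        apply prod_eq_zero (mem_erase.mpr ⟨fun hc => hne hc.symm, mem_univ i0⟩)
        rw [hi0, sub_self, zero_div]
      · intro h; exact absurd (mem_univ i0) h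
    have hzero : ∀ t : ℂ, (l X * q t) / (l t * q X) * (f t / (t - X)) = 0 := by
      intro t; rw [hlX]; simp
    have hint : (∮ t in C(c, r), (l X * q t) / (l t * q X) * (f t / (t - X))) = 0 := by
      simp only [hzero]
      simp [circleIntegral]
    rw [hRX, hint, mul_zero, sub_self]
  · -- main case
    push_neg at hXx
    have hqdiff : Differentiable ℂ q := by
      have hqe : q = fun s => ∏ j, (s - z j) := funext hq
      rw [hqe]
      exact Differentiable.fun_finsetProd (f := fun j s => s - z j) fun j _ => by fun_prop
    have hFdiff : DifferentiableOn ℂ (fun t => q t * f t) U := hqdiff.differentiableOn.mul hf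
    have hlX_ne : l X ≠ 0 := by
      rw [hl]; exact prod_ne_zero_iff.mpr fun i _ => sub_ne_zero.mpr (hXx i)
    set C0 : ℂ := l X / q X * (∏ i, (X - x i))⁻¹ with hC0
    set Cc : Fin (n + 1) → ℂ :=
      fun i => l X / q X * ((∏ j ∈ univ.erase i, (x i - x j))⁻¹ * (x i - X)⁻¹) with hCc
    -- pointwise partial fraction expansion on the circle
    have hpt : ∀ t ∈ Metric.sphere c r,
        (l X * q t) / (l t * q X) * (f t / (t - X)) =
        (∑ i, Cc i * ((t - x i)⁻¹ * (q t * f t))) + C0 * ((t - X)⁻¹ * (q t * f t)) := by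
      intro t ht
      rw [Metric.mem_sphere] at ht
      have htx : ∀ i, t ≠ x i := by
        intro i hc
        have h2 := Metric.mem_ball.mp (hxball i)
        rw [← hc] at h2
        exact absurd ht (ne_of_lt h2)
      have htX : t ≠ X := by
        intro hc
        have h2 := Metric.mem_ball.mp hX
        rw [← hc] at h2
        exact absurd ht (ne_of_lt h2)
      have hprodt : (∏ i, (t - x i)) ≠ 0 :=
        prod_ne_zero_iff.mpr fun i _ => sub_ne_zero.mpr (htx i)
      have htX' : t - X ≠ 0 := sub_ne_zero.mpr htX
      calc (l X * q t) / (l t * q X) * (f t / (t - X))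
          = l X / q X * (((t - X) * ∏ i, (t - x i))⁻¹ * (q t * f t)) := by
            rw [hl t]
            field_simp
        _ = l X / q X * ((((∏ i, (X - x i))⁻¹ * (t - X)⁻¹) +
              ∑ i, (∏ j ∈ univ.erase i, (x i - x j))⁻¹ * (x i - X)⁻¹ * (t - x i)⁻¹) *
              (q t * f t)) := by
            rw [partial_fractions₂ x hx X t hXx htx htX]
        _ = (∑ i, Cc i * ((t - x i)⁻¹ * (q t * f t))) + C0 * ((t - X)⁻¹ * (q t * f t)) := by
            rw [add_mul, mul_add, add_comm, sum_mul, Finset.mul_sum]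
            congr 1
            · exact sum_congr rfl fun i _ => by simp only [hCc]; ring
            · simp only [hC0]; ring
    have hInt : ∀ w, w ∈ Metric.ball c r →
        CircleIntegrable (fun t => (t - w)⁻¹ * (q t * f t)) c r :=
      fun w hw => circleIntegrable_one_pole c r hr U hUsub _ hFdiff w hw
    have hCI : (∮ t in C(c, r), (l X * q t) / (l t * q X) * (f t / (t - X))) =
        (∑ i, Cc i * (2 * Real.pi * Complex.I * (q (x i) * f (x i)))) +
          C0 * (2 * Real.pi * Complex.I * (q X * f X)) := by
      rw [circleIntegral.integral_congr hr.le fun t ht => hpt t ht]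
      rw [circleIntegral_add'
        (circleIntegrable_sum univ _
          (fun i _ => circleIntegrable_const_mul (hInt (x i) (hxball i)) (Cc i)))
        (circleIntegrable_const_mul (hInt X hX) C0)]
      rw [circleIntegral_finset_sum univ _
        (fun i _ => circleIntegrable_const_mul (hInt (x i) (hxball i)) (Cc i))]
      congr 1
      · refine sum_congr rfl fun i _ => ?_
        rw [circleIntegral.integral_const_mul,
          cauchy_one_pole c r hr U hUsub _ hFdiff (x i) (hxball i)]
      · rw [circleIntegral.integral_const_mul, cauchy_one_pole c r hr U hUsub _ hFdiff X hX]
    rw [hCI]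
    have key1 : (1 / (2 * (Real.pi : ℂ) * Complex.I)) *
        ((∑ i, Cc i * (2 * Real.pi * Complex.I * (q (x i) * f (x i)))) +
          C0 * (2 * Real.pi * Complex.I * (q X * f X))) =
        (∑ i, Cc i * (q (x i) * f (x i))) + C0 * (q X * f X) := by
      rw [mul_add, Finset.mul_sum]
      congr 1
      · refine sum_congr rfl fun i _ => ?_
        field_simp
      · field_simp
    rw [key1]
    have hC0f : C0 * (q X * f X) = f X := by
      rw [hC0, ← hl X]
      field_simp
    have hterm : ∀ i, Cc i * (q (x i) * f (x i)) =
        -(f (x i) * (q (x i) / q X) * ∏ j ∈ univ.erase i, (X - x j) / (x i - x j)) := by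
      intro i
      have hW : ∏ j ∈ univ.erase i, (x i - x j) ≠ 0 :=
        prod_ne_zero_iff.mpr fun j hj =>
          sub_ne_zero.mpr fun hc => (mem_erase.mp hj).1 (hx hc.symm)
      have hxiX : x i - X ≠ 0 := sub_ne_zero.mpr fun hc => hXx i hc.symm
      have hXxi : X - x i ≠ 0 := sub_ne_zero.mpr (hXx i)
      simp only [hCc]
      rw [prod_div_distrib, hl,
        ← Finset.mul_prod_erase univ (fun j => X - x j) (mem_univ i)]
      field_simp
      ring
    rw [hR, Finset.sum_congr rfl fun i _ => hterm i]
    rw [hC0f]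
    rw [Finset.sum_neg_distrib]
    ring
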